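/- Let k be a commutative ring, A a central k-algebra which is finitely presented as a k-module, R a flat commutative k-algebra, S a faithfully flat commutative R-algebra, and B an R-algebra such that B ⊗_R S is isomorphic as an S-algebra to A ⊗_k S. Then B is finitely presented as an R-module, and the canonical ring homomorphism χ : R → Cent_R(B), sending r to the map b ↦ rb, is an isomorphism; in particular B is a central R-algebra. -/

import Mathlib

set_option maxHeartbeats 1000000
set_option synthInstance.maxHeartbeats 400000

open TensorProduct

section HomBC

variable (R S : Type*) [CommRing R] [CommRing S] [Algebra R S]
variable (M N : Type*) [AddCommGroup M] [Module R M] [AddCommGroup N] [Module R N]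

/-- The natural base-change map `S ⊗[R] Hom_R(M,N) →ₗ[S] Hom_S(S ⊗ M, S ⊗ N)`. -/
noncomputable def homBC : S ⊗[R] (M →ₗ[R] N) →ₗ[S] (S ⊗[R] M →ₗ[S] S ⊗[R] N) :=
  LinearMap.liftBaseChange S (LinearMap.baseChangeHom R S M N)

variable {R S M N}

@[simp] lemma homBC_tmul_tmul (s : S) (f : M →ₗ[R] N) (t : S) (m : M) :
    homBC R S M N (s ⊗ₜ f) (t ⊗ₜ m) = (s * t) ⊗ₜ f m := by
  simp only [homBC, LinearMap.liftBaseChange_tmul, LinearMap.smul_apply,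
    LinearMap.baseChangeHom_apply, LinearMap.baseChange_tmul, smul_tmul', smul_eq_mul]

/-- Evaluation map at `m`. -/
noncomputable def evalAt (m : M) : (M →ₗ[R] N) →ₗ[R] N where
  toFun f := f m
  map_add' _ _ := rfl
  map_smul' _ _ := rfl

@[simp] lemma evalAt_apply (m : M) (f : M →ₗ[R] N) : (evalAt (N := N) m) f = f m := rfl

lemma homBC_one_tmul (x : S ⊗[R] (M →ₗ[R] N)) (m : M) :
    homBC R S M N x ((1 : S) ⊗ₜ m) = LinearMap.lTensor S (evalAt m) x := by
  induction x using TensorProduct.induction_on with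
  | zero => simp
  | tmul s f => simp [mul_comm]
  | add x y hx hy => simp [hx, hy]

lemma homBC_tmul_eq_smul (x : S ⊗[R] (M →ₗ[R] N)) (t : S) (m : M) :
    homBC R S M N x (t ⊗ₜ m) = t • homBC R S M N x ((1 : S) ⊗ₜ m) := by
  rw [← map_smul]
  congr 1
  rw [smul_tmul', smul_eq_mul, mul_one]

lemma homBC_eq_zero [Module.Finite R M] [Module.Flat R S] {x : S ⊗[R] (M →ₗ[R] N)}
    (hev : ∀ m : M, LinearMap.lTensor S (evalAt (N := N) m) x = 0) : x = 0 := by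
  classical
  obtain ⟨n, p, hp⟩ := Module.Finite.exists_fin' R M
  set E : (M →ₗ[R] N) →ₗ[R] (Fin n → N) :=
    LinearMap.pi (fun i => evalAt (p (Pi.single i 1))) with hE_def
  have hE : Function.Injective E := by
    rw [← LinearMap.ker_eq_bot, LinearMap.ker_eq_bot']
    intro f hf
    have hgen : ∀ i, f (p (Pi.single i 1)) = 0 := fun i => congrFun hf i
    have hcomp : f.comp p = 0 := by
      apply LinearMap.pi_ext
      intro i x
      have hsx : (Pi.single i x : Fin n → R) = x • (Pi.single i 1 : Fin n → R) := by
        funext j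
        by_cases h : j = i <;> simp [Pi.single_apply, h]
      rw [hsx]
      simp [map_smul, hgen i]
    ext m
    obtain ⟨v, rfl⟩ := hp m
    have := LinearMap.congr_fun hcomp v
    simpa using this
  have hET : Function.Injective (LinearMap.lTensor S E) :=
    Module.Flat.lTensor_preserves_injective_linearMap E hE
  have hsplit : ∀ (z : S ⊗[R] (M →ₗ[R] N)) (i : Fin n),
      (TensorProduct.piRight R S S (fun _ : Fin n => N)) (LinearMap.lTensor S E z) i
        = LinearMap.lTensor S (evalAt (p (Pi.single i 1))) z := by
    intro z i
    induction z using TensorProduct.induction_on with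
    | zero => simp
    | tmul s f => simp [hE_def]
    | add z w hz hw =>
      simp only [map_add, Pi.add_apply, TensorProduct.piRight_apply] at hz hw ⊢
      rw [hz, hw]
  have key : LinearMap.lTensor S E x = 0 := by
    apply (TensorProduct.piRight R S S (fun _ : Fin n => N)).injective
    rw [map_zero]
    funext i
    rw [hsplit x i, hev]
    simp
  exact hET (by rw [key, map_zero])

lemma homBC_injective [Module.Finite R M] [Module.Flat R S] :
    Function.Injective (homBC R S M N) := by
  intro x y hxy
  rw [← sub_eq_zero]
  apply homBC_eq_zero
  intro m
  rw [map_sub, ← homBC_one_tmul, ← homBC_one_tmul, hxy, sub_self]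

end HomBC
section HomBCSurj

variable {R S : Type*} [CommRing R] [CommRing S] [Algebra R S]
variable {M N : Type*} [AddCommGroup M] [Module R M] [AddCommGroup N] [Module R N]

lemma homBC_natural {M' : Type*} [AddCommGroup M'] [Module R M'] (g : M' →ₗ[R] M)
    (x : S ⊗[R] (M →ₗ[R] N)) (u : S ⊗[R] M') :
    homBC R S M' N (LinearMap.lTensor S (LinearMap.lcomp R N g) x) u
      = homBC R S M N x (g.baseChange S u) := by
  induction x using TensorProduct.induction_on with
  | zero => simp
  | tmul s f =>
    induction u using TensorProduct.induction_on with
    | zero => simp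
    | tmul t m' => simp
    | add u v hu hv => simp only [map_add, hu, hv]
  | add x y hx hy => simp only [map_add, LinearMap.add_apply, hx, hy]

/-- The map `N →ₗ[R] ((ι → R) →ₗ[R] N)` sending `n` to `v ↦ v i • n`. -/
noncomputable def coordMap {n : ℕ} (i : Fin n) : N →ₗ[R] ((Fin n → R) →ₗ[R] N) :=
  LinearMap.smulRightₗ (LinearMap.proj i)

@[simp] lemma coordMap_apply {n : ℕ} (i : Fin n) (x : N) (v : Fin n → R) :
    (coordMap (R := R) i x) v = v i • x := rfl

lemma homBC_coordMap {n : ℕ} (z : S ⊗[R] N) (i : Fin n) (w : Fin n → R) :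
    homBC R S (Fin n → R) N (LinearMap.lTensor S (coordMap i) z) ((1 : S) ⊗ₜ w)
      = w i • z := by
  induction z using TensorProduct.induction_on with
  | zero => simp
  | tmul s y => simp [smul_tmul]
  | add z z' hz hz' => simp only [map_add, LinearMap.add_apply, hz, hz', smul_add]

lemma homBC_surjective_free [Module.Flat R S] {n : ℕ} :
    Function.Surjective (homBC R S (Fin n → R) N) := by
  classical
  intro G
  refine ⟨∑ i, LinearMap.lTensor S (coordMap i) (G ((1 : S) ⊗ₜ Pi.single i 1)), ?_⟩
  apply LinearMap.ext
  intro u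
  have key : ∀ w : Fin n → R,
      homBC R S (Fin n → R) N (∑ i, LinearMap.lTensor S (coordMap i)
        (G ((1 : S) ⊗ₜ Pi.single i 1))) ((1 : S) ⊗ₜ w) = G ((1 : S) ⊗ₜ w) := by
    intro w
    rw [map_sum]
    simp only [LinearMap.coe_sum, Finset.sum_apply]
    have : ∀ i, homBC R S (Fin n → R) N (LinearMap.lTensor S (coordMap i)
        (G ((1 : S) ⊗ₜ Pi.single i 1))) ((1 : S) ⊗ₜ w) = w i • G ((1 : S) ⊗ₜ Pi.single i 1) :=
      fun i => homBC_coordMap _ i w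
    rw [Finset.sum_congr rfl (fun i _ => this i)]
    have : ∀ i : Fin n, w i • G ((1 : S) ⊗ₜ Pi.single i 1)
        = G ((1 : S) ⊗ₜ Pi.single i (w i)) := by
      intro i
      rw [← LinearMap.map_smul_of_tower]
      congr 1
      have hs : (Pi.single i (w i) : Fin n → R) = w i • (Pi.single i 1 : Fin n → R) := by
        funext j; by_cases h : j = i <;> simp [Pi.single_apply, h]
      rw [hs, tmul_smul]
    rw [Finset.sum_congr rfl (fun i _ => this i), ← map_sum, ← tmul_sum]
    congr 1
    exact congrArg _ (Finset.univ_sum_single w)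
  induction u using TensorProduct.induction_on with
  | zero => simp
  | tmul t w =>
    have ht : (t ⊗ₜ w : S ⊗[R] (Fin n → R)) = t • ((1 : S) ⊗ₜ w) := by
      rw [smul_tmul', smul_eq_mul, mul_one]
    rw [ht, map_smul, map_smul, key]
  | add u v hu hv => rw [map_add, map_add, hu, hv]

end HomBCSurj
section HomBCSurj2

variable {R S : Type*} [CommRing R] [CommRing S] [Algebra R S]
variable {M N : Type*} [AddCommGroup M] [Module R M] [AddCommGroup N] [Module R N]

lemma homBC_surjective [Module.FinitePresentation R M] [Module.Flat R S] :
    Function.Surjective (homBC R S M N) := by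
  classical
  obtain ⟨n, p, hp⟩ := Module.Finite.exists_fin' R M
  have hker : (LinearMap.ker p).FG := Module.FinitePresentation.fg_ker p hp
  haveI : Module.Finite R (LinearMap.ker p) := ⟨(Submodule.fg_top _).mpr hker⟩
  obtain ⟨m, q', hq'⟩ := Module.Finite.exists_fin' R (LinearMap.ker p)
  set q : (Fin m → R) →ₗ[R] (Fin n → R) := (LinearMap.ker p).subtype ∘ₗ q' with hq_def
  have hrange : LinearMap.range q = LinearMap.ker p := by
    rw [hq_def, LinearMap.range_comp, LinearMap.range_eq_top.mpr hq', Submodule.map_top,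
      Submodule.range_subtype]
  have hpq : p ∘ₗ q = 0 := by
    apply LinearMap.ext
    intro v
    have : q v ∈ LinearMap.ker p := by rw [← hrange]; exact ⟨v, rfl⟩
    simpa using this
  -- Hom exact sequence
  set α : (M →ₗ[R] N) →ₗ[R] ((Fin n → R) →ₗ[R] N) := LinearMap.lcomp R N p with hα_def
  set β : ((Fin n → R) →ₗ[R] N) →ₗ[R] ((Fin m → R) →ₗ[R] N) := LinearMap.lcomp R N q with hβ_def
  have hαβ : Function.Exact α β := by
    rw [LinearMap.exact_iff]
    ext h
    constructor
    · intro hh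
      have hh' : h.comp q = 0 := hh
      have hle : LinearMap.ker p ≤ LinearMap.ker h := by
        rw [← hrange]
        rintro _ ⟨v, rfl⟩
        exact LinearMap.congr_fun hh' v
      set eqv := p.quotKerEquivOfSurjective hp with heqv
      refine ⟨(Submodule.liftQ (LinearMap.ker p) h hle) ∘ₗ eqv.symm.toLinearMap, ?_⟩
      show ((Submodule.liftQ (LinearMap.ker p) h hle) ∘ₗ eqv.symm.toLinearMap) ∘ₗ p = h
      apply LinearMap.ext
      intro v
      have h1 : eqv (Submodule.Quotient.mk v) = p v := rfl
      have h2 : eqv.symm (p v) = Submodule.Quotient.mk v := by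
        rw [← h1, LinearEquiv.symm_apply_apply]
      simp [h2]
    · rintro ⟨f, rfl⟩
      show (α f).comp q = 0
      rw [hα_def]
      show (f.comp p).comp q = 0
      rw [LinearMap.comp_assoc, hpq, LinearMap.comp_zero]
  have hαβS : Function.Exact (LinearMap.lTensor S α) (LinearMap.lTensor S β) :=
    Module.Flat.lTensor_exact S hαβ
  intro F
  -- pull back to the free cover
  obtain ⟨x', hx'⟩ := homBC_surjective_free (R := R) (S := S) (N := N) (n := n)
    (F ∘ₗ p.baseChange S)
  have hβx' : LinearMap.lTensor S β x' = 0 := by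
    apply homBC_injective (R := R) (S := S) (M := Fin m → R) (N := N)
    rw [map_zero]
    apply LinearMap.ext
    intro u
    rw [hβ_def]
    rw [homBC_natural q x' u, hx']
    have : p.baseChange S ∘ₗ q.baseChange S = (0 : S ⊗[R] (Fin m → R) →ₗ[S] S ⊗[R] M) := by
      rw [← LinearMap.baseChange_comp, hpq]
      exact map_zero (LinearMap.baseChangeHom R S _ _)
    simp only [LinearMap.comp_apply, LinearMap.zero_apply]
    rw [show F ((p.baseChange S) ((q.baseChange S) u)) = F ((p.baseChange S ∘ₗ q.baseChange S) u) from rfl, this]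
    simp
  obtain ⟨x, hx⟩ := (hαβS x').mp hβx'
  refine ⟨x, ?_⟩
  apply LinearMap.ext
  intro u
  obtain ⟨u', rfl⟩ : ∃ u', p.baseChange S u' = u := by
    have : Function.Surjective (p.baseChange S) := by
      rw [LinearMap.baseChange_eq_ltensor]
      exact LinearMap.lTensor_surjective S hp
    exact this u
  have := homBC_natural (S := S) (N := N) p x u'
  rw [hα_def] at hx
  rw [← this, hx, hx']
  rfl

end HomBCSurj2
section Descent

variable {R S : Type*} [CommRing R] [CommRing S] [Algebra R S]
variable {M : Type*} [AddCommGroup M] [Module R M]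

lemma finite_descent [Module.FaithfullyFlat R S] [Module.Finite S (S ⊗[R] M)] :
    Module.Finite R M := by
  classical
  obtain ⟨t, ht⟩ := (Module.Finite.fg_top : (⊤ : Submodule S (S ⊗[R] M)).FG)
  set G : Finset M := t.biUnion
    (fun u => (TensorProduct.exists_finset u).choose.image Prod.snd) with hG_def
  set M₀ : Submodule R M := Submodule.span R (G : Set M) with hM₀_def
  set ι : M₀ →ₗ[R] M := M₀.subtype with hι_def
  have hsurj : Function.Surjective (ι.baseChange S) := by
    rw [← LinearMap.range_eq_top, ← top_le_iff, ← ht, Submodule.span_le]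
    intro u hu
    have hsu := (TensorProduct.exists_finset u).choose_spec
    rw [hsu]
    apply Submodule.sum_mem
    intro i hi
    have hmem : i.2 ∈ G := by
      rw [hG_def]
      exact Finset.mem_biUnion.mpr ⟨u, Finset.mem_coe.mp hu, Finset.mem_image_of_mem Prod.snd hi⟩
    exact ⟨i.1 ⊗ₜ ⟨i.2, Submodule.subset_span hmem⟩, by simp [hι_def]⟩
  have hQ : Subsingleton (S ⊗[R] (M ⧸ M₀)) := by
    have hzero : ∀ z : S ⊗[R] (M ⧸ M₀), z = 0 := by
      intro z
      obtain ⟨y, rfl⟩ := LinearMap.lTensor_surjective S (Submodule.mkQ_surjective M₀) z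
      obtain ⟨w, rfl⟩ := hsurj y
      rw [LinearMap.baseChange_eq_ltensor, ← LinearMap.lTensor_comp_apply]
      have h0 : M₀.mkQ ∘ₗ ι = 0 := by
        apply LinearMap.ext; intro x
        show M₀.mkQ (ι x) = 0
        rw [Submodule.mkQ_apply, Submodule.Quotient.mk_eq_zero]
        exact x.2
      rw [h0, LinearMap.lTensor_zero, LinearMap.zero_apply]
    exact ⟨fun a b => by rw [hzero a, hzero b]⟩
  haveI := hQ
  haveI := Module.FaithfullyFlat.lTensor_reflects_triviality R S (M ⧸ M₀)
  have htop : M₀ = ⊤ := by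
    rw [Submodule.eq_top_iff']
    intro m
    rw [← Submodule.Quotient.mk_eq_zero]
    exact Subsingleton.elim _ _
  exact ⟨⟨G, by rw [← htop]⟩⟩

lemma fp_descent [Module.FaithfullyFlat R S] [Module.FinitePresentation S (S ⊗[R] M)] :
    Module.FinitePresentation R M := by
  classical
  haveI : Module.Finite R M := finite_descent (S := S)
  obtain ⟨n, p, hp⟩ := Module.Finite.exists_fin' R M
  have hbc : Function.Surjective (p.baseChange S) := by
    rw [LinearMap.baseChange_eq_ltensor]; exact LinearMap.lTensor_surjective S hp
  haveI : Module.FinitePresentation S (S ⊗[R] (Fin n → R)) :=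
    Module.finitePresentation_of_projective S _
  have hkerfg : (LinearMap.ker (p.baseChange S)).FG :=
    Module.FinitePresentation.fg_ker _ hbc
  have hex : Function.Exact ((LinearMap.ker p).subtype.baseChange S) (p.baseChange S) :=
    lTensor_exact S p.exact_subtype_ker_map hp
  have hkereq : LinearMap.ker (p.baseChange S)
      = LinearMap.range ((LinearMap.ker p).subtype.baseChange S) :=
    LinearMap.exact_iff.mp hex
  have hinj : Function.Injective ((LinearMap.ker p).subtype.baseChange S) := by
    rw [LinearMap.baseChange_eq_ltensor]
    exact Module.Flat.lTensor_preserves_injective_linearMap _ (Submodule.injective_subtype _)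
  haveI : Module.Finite S (S ⊗[R] (LinearMap.ker p)) := by
    haveI : Module.Finite S (LinearMap.range ((LinearMap.ker p).subtype.baseChange S)) :=
      ⟨(Submodule.fg_top _).mpr (hkereq ▸ hkerfg)⟩
    exact Module.Finite.equiv (LinearEquiv.ofInjective _ hinj).symm
  haveI : Module.Finite R (LinearMap.ker p) := finite_descent (S := S)
  exact Module.finitePresentation_of_surjective p hp ((Submodule.fg_top _).mp Module.Finite.fg_top)

end Descent
/-- Let `A` be a central `k`-algebra which is finitely presented as
a `k`-module, `R` a flat commutative `k`-algebra, `S` a faithfully flat commutative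
`R`-algebra, and `B` an `R`-algebra such that `B ⊗_R S ≅ A ⊗_k S` as `S`-algebras.
Then `B` is finitely presented as an `R`-module and the canonical map
`R → Cent_R(B)`, `r ↦ (b ↦ r • b)`, is an isomorphism (formalized: it is injective
and every centroidal transformation of `B` is of the form `r • id`); in particular
`B` is a central `R`-algebra.  Centrality of `A` is expressed in the same way. -/
theorem stmt_8 {k A R S B : Type*} [CommRing k]
    [AddCommGroup A] [Module k A] [Module.FinitePresentation k A]
    [CommRing R] [Algebra k R] [Module.Flat k R]
    [CommRing S] [Algebra R S] [Algebra k S] [IsScalarTower k R S]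
    [Module.FaithfullyFlat R S]
    [AddCommGroup B] [Module R B]
    (mulA : A →ₗ[k] A →ₗ[k] A)
    (hAinj : Function.Injective fun s : k => (s • LinearMap.id : A →ₗ[k] A))
    (hAsurj : ∀ χ : A →ₗ[k] A,
      (∀ a₁ a₂ : A, χ (mulA a₁ a₂) = mulA (χ a₁) a₂ ∧
        χ (mulA a₁ a₂) = mulA a₁ (χ a₂)) →
      ∃ s : k, χ = s • LinearMap.id)
    (mulB : B →ₗ[R] B →ₗ[R] B)
    (mulAS : (S ⊗[k] A) →ₗ[S] (S ⊗[k] A) →ₗ[S] (S ⊗[k] A))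
    (hmulAS : ∀ (s₁ s₂ : S) (a₁ a₂ : A),
      mulAS (s₁ ⊗ₜ a₁) (s₂ ⊗ₜ a₂) = (s₁ * s₂) ⊗ₜ (mulA a₁ a₂))
    (mulBS : (S ⊗[R] B) →ₗ[S] (S ⊗[R] B) →ₗ[S] (S ⊗[R] B))
    (hmulBS : ∀ (s₁ s₂ : S) (b₁ b₂ : B),
      mulBS (s₁ ⊗ₜ b₁) (s₂ ⊗ₜ b₂) = (s₁ * s₂) ⊗ₜ (mulB b₁ b₂))
    (e : (S ⊗[R] B) ≃ₗ[S] (S ⊗[k] A))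
    (hmul_e : ∀ u v : S ⊗[R] B, e (mulBS u v) = mulAS (e u) (e v)) :
    Module.FinitePresentation R B ∧
    Function.Injective (fun r : R => (r • LinearMap.id : B →ₗ[R] B)) ∧
    ∀ χ : B →ₗ[R] B,
      (∀ b₁ b₂ : B, χ (mulB b₁ b₂) = mulB (χ b₁) b₂ ∧
        χ (mulB b₁ b₂) = mulB b₁ (χ b₂)) →
      ∃ r : R, χ = r • LinearMap.id := by
  classical
  haveI hFlatkS : Module.Flat k S := Module.Flat.trans k R S
  -- Part 1 : finite presentation of B over R
  haveI hFPSA : Module.FinitePresentation S (S ⊗[k] A) := inferInstance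
  haveI hFPSB : Module.FinitePresentation S (S ⊗[R] B) := by
    apply Module.finitePresentation_of_surjective e.symm.toLinearMap e.symm.surjective
    have : LinearMap.ker e.symm.toLinearMap = ⊥ := LinearMap.ker_eq_bot.mpr e.symm.injective
    rw [this]
    exact Submodule.fg_bot
  haveI hFP : Module.FinitePresentation R B := fp_descent (S := S)
  refine ⟨hFP, ?_, ?_⟩
  · -- Part 2 : injectivity
    intro r r' h
    rw [← sub_eq_zero]
    set d := r - r' with hd_def
    have hd : d • (LinearMap.id : B →ₗ[R] B) = 0 := by
      rw [hd_def, sub_smul, sub_eq_zero]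
      exact h
    have hdB : ∀ b : B, d • b = 0 := fun b => LinearMap.congr_fun hd b
    set s : S := algebraMap R S d with hs_def
    have hSB : ∀ u : S ⊗[R] B, s • u = 0 := by
      intro u
      rw [hs_def, algebraMap_smul]
      induction u using TensorProduct.induction_on with
      | zero => simp
      | tmul t b => rw [← tmul_smul, hdB, tmul_zero]
      | add u v hu hv => rw [smul_add, hu, hv, add_zero]
    have hSA : ∀ a : A, (s ⊗ₜ a : S ⊗[k] A) = 0 := by
      intro a
      have h1 : s • ((1 : S) ⊗ₜ a : S ⊗[k] A) = 0 := by
        have := hSB (e.symm ((1 : S) ⊗ₜ a))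
        have h2 := congrArg e this
        rw [map_smul, e.apply_symm_apply, map_zero] at h2
        exact h2
      rw [← h1, smul_tmul', smul_eq_mul, mul_one]
    -- conclude s = 0 using finite generation of A and flatness of S over k
    obtain ⟨n, p, hp⟩ := Module.Finite.exists_fin' k A
    set J : k →ₗ[k] (Fin n → A) :=
      LinearMap.pi (fun i => LinearMap.toSpanSingleton k A (p (Pi.single i 1))) with hJ_def
    have hJ : Function.Injective J := by
      rw [← LinearMap.ker_eq_bot, LinearMap.ker_eq_bot']
      intro c hc
      have hgen : ∀ i, c • p (Pi.single i 1) = 0 := fun i => congrFun hc i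
      have hall : ∀ a : A, c • a = 0 := by
        intro a
        obtain ⟨v, rfl⟩ := hp a
        have hv : v = ∑ i, Pi.single i (v i) := (Finset.univ_sum_single v).symm
        rw [hv, map_sum, Finset.smul_sum]
        apply Finset.sum_eq_zero
        intro i _
        have hsx : (Pi.single i (v i) : Fin n → k) = v i • (Pi.single i 1 : Fin n → k) := by
          funext j; by_cases hij : j = i <;> simp [Pi.single_apply, hij]
        rw [hsx, map_smul, smul_comm, hgen i, smul_zero]
      have : c • (LinearMap.id : A →ₗ[k] A) = (0 : k) • LinearMap.id := by
        rw [zero_smul]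
        apply LinearMap.ext
        intro a
        exact hall a
      exact hAinj this
    have hbcJ : Function.Injective (LinearMap.lTensor S J) :=
      Module.Flat.lTensor_preserves_injective_linearMap J hJ
    have hJs : LinearMap.lTensor S J (s ⊗ₜ (1 : k)) = 0 := by
      rw [LinearMap.lTensor_tmul]
      apply (TensorProduct.piRight k S S (fun _ : Fin n => A)).injective
      rw [map_zero]
      funext i
      have : (TensorProduct.piRight k S S (fun _ : Fin n => A)) (s ⊗ₜ J 1) i
          = s ⊗ₜ (J 1 i) := by simp
      rw [this]
      have : J 1 i = p (Pi.single i 1) := by simp [hJ_def]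
      rw [this, hSA]
      simp
    have h1 : (s ⊗ₜ (1 : k) : S ⊗[k] k) = 0 := hbcJ (by rw [hJs, map_zero])
    have hs0 : s = 0 := by
      have := congrArg (TensorProduct.rid k S) h1
      simpa using this
    -- descend to R using faithful flatness
    have hzero : LinearMap.lTensor S (LinearMap.toSpanSingleton R R d) = 0 := by
      apply TensorProduct.ext'
      intro t c
      rw [LinearMap.lTensor_tmul]
      have : LinearMap.toSpanSingleton R R d c = c * d := by
        simp [LinearMap.toSpanSingleton_apply, smul_eq_mul]
      rw [this]
      have h2 : (t ⊗ₜ (c * d) : S ⊗[R] R) = t ⊗ₜ ((c * d) • (1 : R)) := by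
        rw [smul_eq_mul, mul_one]
      rw [h2, tmul_smul, smul_tmul', Algebra.smul_def, map_mul, ← hs_def, hs0, mul_zero, zero_mul, zero_tmul]
      simp
    have hd0 : LinearMap.toSpanSingleton R R d = 0 :=
      (Module.FaithfullyFlat.zero_iff_lTensor_zero R S _).mpr hzero
    have : d = 0 := by
      have := LinearMap.congr_fun hd0 1
      simpa using this
    exact this
  · -- Part 3 : surjectivity
    intro χ hχ
    -- centroidality of the base change of χ
    have hχS₁ : ∀ u v : S ⊗[R] B, χ.baseChange S (mulBS u v) = mulBS (χ.baseChange S u) v := by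
      intro u v
      induction u using TensorProduct.induction_on with
      | zero => simp only [map_zero, LinearMap.zero_apply]
      | tmul t b =>
        induction v using TensorProduct.induction_on with
        | zero => simp only [map_zero]
        | tmul t' b' => simp [hmulBS, (hχ b b').1]
        | add v w hv hw => simp only [map_add, hv, hw]
      | add u u' hu hu' => simp only [map_add, LinearMap.add_apply, hu, hu']
    have hχS₂ : ∀ u v : S ⊗[R] B, χ.baseChange S (mulBS u v) = mulBS u (χ.baseChange S v) := by
      intro u v
      induction u using TensorProduct.induction_on with
      | zero => simp only [map_zero, LinearMap.zero_apply]
      | tmul t b =>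
        induction v using TensorProduct.induction_on with
        | zero => simp only [map_zero]
        | tmul t' b' => simp [hmulBS, (hχ b b').2]
        | add v w hv hw => simp only [map_add, hv, hw]
      | add u u' hu hu' => simp only [map_add, LinearMap.add_apply, hu, hu']
    set χ' : S ⊗[k] A →ₗ[S] S ⊗[k] A :=
      e.toLinearMap ∘ₗ χ.baseChange S ∘ₗ e.symm.toLinearMap with hχ'_def
    have hχ'app : ∀ v : S ⊗[k] A, χ' v = e (χ.baseChange S (e.symm v)) := fun v => rfl
    have he_mul : ∀ u v : S ⊗[k] A, mulAS u v = e (mulBS (e.symm u) (e.symm v)) := by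
      intro u v; rw [hmul_e, e.apply_symm_apply, e.apply_symm_apply]
    have hχ'₁ : ∀ u v : S ⊗[k] A, χ' (mulAS u v) = mulAS (χ' u) v := by
      intro u v
      rw [he_mul u v, hχ'app, e.symm_apply_apply, hχS₁, hmul_e, e.apply_symm_apply, hχ'app]
    have hχ'₂ : ∀ u v : S ⊗[k] A, χ' (mulAS u v) = mulAS u (χ' v) := by
      intro u v
      rw [he_mul u v, hχ'app, e.symm_apply_apply, hχS₂, hmul_e, e.apply_symm_apply, hχ'app]
    obtain ⟨x, hx⟩ := homBC_surjective (R := k) (S := S) (M := A) (N := A) χ'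
    -- the centroid operators
    set Lpost : (A →ₗ[k] A) →ₗ[k] (A →ₗ[k] A →ₗ[k] A) :=
      (LinearMap.lcomp k (A →ₗ[k] A) mulA).comp (LinearMap.llcomp k A A A) with hLpost
    set Lfirst : (A →ₗ[k] A) →ₗ[k] (A →ₗ[k] A →ₗ[k] A) :=
      LinearMap.llcomp k A A (A →ₗ[k] A) mulA with hLfirst
    set Lsecond : (A →ₗ[k] A) →ₗ[k] (A →ₗ[k] A →ₗ[k] A) :=
      (LinearMap.lcomp k (A →ₗ[k] A) mulA).comp (LinearMap.llcomp k A A A).flip with hLsecond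
    set T₁ : (A →ₗ[k] A) →ₗ[k] (A →ₗ[k] A →ₗ[k] A) := Lpost - Lfirst with hT₁_def
    set T₂ : (A →ₗ[k] A) →ₗ[k] (A →ₗ[k] A →ₗ[k] A) := Lpost - Lsecond with hT₂_def
    have hLpost_app : ∀ (f : A →ₗ[k] A) (a₁ a₂ : A),
        Lpost f a₁ a₂ = f (mulA a₁ a₂) := fun f a₁ a₂ => rfl
    have hLfirst_app : ∀ (f : A →ₗ[k] A) (a₁ a₂ : A),
        Lfirst f a₁ a₂ = mulA (f a₁) a₂ := fun f a₁ a₂ => rfl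
    have hLsecond_app : ∀ (f : A →ₗ[k] A) (a₁ a₂ : A),
        Lsecond f a₁ a₂ = mulA a₁ (f a₂) := fun f a₁ a₂ => rfl
    have hT₁app : ∀ (f : A →ₗ[k] A) (a₁ a₂ : A),
        T₁ f a₁ a₂ = f (mulA a₁ a₂) - mulA (f a₁) a₂ := by
      intro f a₁ a₂
      rw [hT₁_def]
      simp only [LinearMap.sub_apply]
      rw [hLpost_app, hLfirst_app]
    have hT₂app : ∀ (f : A →ₗ[k] A) (a₁ a₂ : A),
        T₂ f a₁ a₂ = f (mulA a₁ a₂) - mulA a₁ (f a₂) := by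
      intro f a₁ a₂
      rw [hT₂_def]
      simp only [LinearMap.sub_apply]
      rw [hLpost_app, hLsecond_app]
    set J₀ : k →ₗ[k] (A →ₗ[k] A) :=
      LinearMap.toSpanSingleton k (A →ₗ[k] A) LinearMap.id with hJ₀_def
    have hexact : Function.Exact J₀ (T₁.prod T₂) := by
      intro f
      constructor
      · intro hf
        have h1 : T₁ f = 0 := by
          have := congrArg Prod.fst hf
          simpa [LinearMap.prod_apply] using this
        have h2 : T₂ f = 0 := by
          have := congrArg Prod.snd hf
          simpa [LinearMap.prod_apply] using this
        have hc : ∀ a₁ a₂ : A, f (mulA a₁ a₂) = mulA (f a₁) a₂ ∧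
            f (mulA a₁ a₂) = mulA a₁ (f a₂) := by
          intro a₁ a₂
          constructor
          · have h3 : T₁ f a₁ a₂ = 0 := by rw [h1]; rfl
            rw [hT₁app] at h3
            exact sub_eq_zero.mp h3
          · have h3 : T₂ f a₁ a₂ = 0 := by rw [h2]; rfl
            rw [hT₂app] at h3
            exact sub_eq_zero.mp h3
        obtain ⟨s₀, hs₀⟩ := hAsurj f hc
        exact ⟨s₀, hs₀.symm⟩
      · rintro ⟨c, rfl⟩
        have hJc : J₀ c = c • LinearMap.id := rfl
        have hz₁ : T₁ (J₀ c) = 0 := by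
          apply LinearMap.ext; intro a₁; apply LinearMap.ext; intro a₂
          rw [hT₁app, hJc]
          simp [map_smul]
        have hz₂ : T₂ (J₀ c) = 0 := by
          apply LinearMap.ext; intro a₁; apply LinearMap.ext; intro a₂
          rw [hT₂app, hJc]
          simp [map_smul]
        show (T₁ (J₀ c), T₂ (J₀ c)) = 0
        rw [hz₁, hz₂]
        rfl
    -- two evaluation claims
    have hclaim2 : ∀ (y : S ⊗[k] (A →ₗ[k] A)) (a₁ a₂ : A),
        LinearMap.lTensor S ((evalAt a₂) ∘ₗ mulA ∘ₗ (evalAt (N := A) a₁)) y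
          = mulAS (homBC k S A A y ((1:S) ⊗ₜ a₁)) ((1:S) ⊗ₜ a₂) := by
      intro y a₁ a₂
      induction y using TensorProduct.induction_on with
      | zero => simp only [map_zero, LinearMap.zero_apply, LinearMap.map_zero]
      | tmul s f =>
        rw [LinearMap.lTensor_tmul, homBC_tmul_tmul, hmulAS]
        simp only [LinearMap.comp_apply, evalAt_apply, mul_one, one_mul]
      | add y z hy hz => simp only [map_add, LinearMap.add_apply, hy, hz]
    have hclaim3 : ∀ (y : S ⊗[k] (A →ₗ[k] A)) (a₁ a₂ : A),
        LinearMap.lTensor S ((mulA a₁) ∘ₗ (evalAt (N := A) a₂)) y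
          = mulAS ((1:S) ⊗ₜ a₁) (homBC k S A A y ((1:S) ⊗ₜ a₂)) := by
      intro y a₁ a₂
      induction y using TensorProduct.induction_on with
      | zero => simp only [map_zero, LinearMap.zero_apply, LinearMap.map_zero]
      | tmul s f =>
        rw [LinearMap.lTensor_tmul, homBC_tmul_tmul, hmulAS]
        simp only [LinearMap.comp_apply, evalAt_apply, mul_one, one_mul]
      | add y z hy hz => simp only [map_add, LinearMap.add_apply, hy, hz]
    -- composition identities
    have hcomp₁ : ∀ a₁ a₂ : A,
        (evalAt (N := A) a₂) ∘ₗ ((evalAt (N := A →ₗ[k] A) a₁) ∘ₗ T₁)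
          = evalAt (mulA a₁ a₂) - ((evalAt a₂) ∘ₗ mulA ∘ₗ (evalAt (N := A) a₁)) := by
      intro a₁ a₂
      apply LinearMap.ext; intro f
      simp only [LinearMap.comp_apply, evalAt_apply, LinearMap.sub_apply]
      exact hT₁app f a₁ a₂
    have hcomp₂ : ∀ a₁ a₂ : A,
        (evalAt (N := A) a₂) ∘ₗ ((evalAt (N := A →ₗ[k] A) a₁) ∘ₗ T₂)
          = evalAt (mulA a₁ a₂) - ((mulA a₁) ∘ₗ (evalAt (N := A) a₂)) := by
      intro a₁ a₂
      apply LinearMap.ext; intro f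
      simp only [LinearMap.comp_apply, evalAt_apply, LinearMap.sub_apply]
      exact hT₂app f a₁ a₂
    have hone : ∀ a₁ a₂ : A, ((1:S) ⊗ₜ (mulA a₁ a₂) : S ⊗[k] A)
        = mulAS ((1:S) ⊗ₜ a₁) ((1:S) ⊗ₜ a₂) := by
      intro a₁ a₂; rw [hmulAS, one_mul]
    have h₁ : LinearMap.lTensor S T₁ x = 0 := by
      apply homBC_eq_zero (R := k) (S := S) (M := A) (N := A →ₗ[k] A)
      intro a₁
      rw [← LinearMap.lTensor_comp_apply]
      apply homBC_eq_zero (R := k) (S := S) (M := A) (N := A)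
      intro a₂
      rw [← LinearMap.lTensor_comp_apply, hcomp₁ a₁ a₂, LinearMap.lTensor_sub,
        LinearMap.sub_apply, ← homBC_one_tmul, hclaim2, hx, hone, hχ'₁, sub_self]
    have h₂ : LinearMap.lTensor S T₂ x = 0 := by
      apply homBC_eq_zero (R := k) (S := S) (M := A) (N := A →ₗ[k] A)
      intro a₁
      rw [← LinearMap.lTensor_comp_apply]
      apply homBC_eq_zero (R := k) (S := S) (M := A) (N := A)
      intro a₂
      rw [← LinearMap.lTensor_comp_apply, hcomp₂ a₁ a₂, LinearMap.lTensor_sub,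
        LinearMap.sub_apply, ← homBC_one_tmul, hclaim3, hx, hone, hχ'₂, sub_self]
    have hTx : LinearMap.lTensor S (T₁.prod T₂) x = 0 := by
      have hsplit : ∀ y : S ⊗[k] (A →ₗ[k] A),
          (TensorProduct.prodRight k S _ _ _) (LinearMap.lTensor S (T₁.prod T₂) y)
            = (LinearMap.lTensor S T₁ y, LinearMap.lTensor S T₂ y) := by
        intro y
        induction y using TensorProduct.induction_on with
        | zero => simp; rfl
        | tmul s f => simp [LinearMap.prod_apply]
        | add y z hy hz => simp only [map_add, hy, hz, Prod.mk_add_mk]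
      have h9 := hsplit x
      rw [h₁, h₂] at h9
      apply (TensorProduct.prodRight k S _ _ _).injective
      rw [h9, map_zero]
      rfl
    obtain ⟨w, hw⟩ := ((Module.Flat.lTensor_exact S hexact) x).mp hTx
    have haux : ∀ w' : S ⊗[k] k, homBC k S A A (LinearMap.lTensor S J₀ w')
        = (TensorProduct.rid k S w') • LinearMap.id := by
      intro w'
      induction w' using TensorProduct.induction_on with
      | zero => simp
      | tmul t c =>
        apply LinearMap.ext; intro u
        rw [LinearMap.lTensor_tmul]
        induction u using TensorProduct.induction_on with
        | zero => simp
        | tmul t' a =>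
          rw [homBC_tmul_tmul]
          have hJca : J₀ c a = c • a := rfl
          have hrid : TensorProduct.rid k S (t ⊗ₜ c) = c • t := TensorProduct.rid_tmul t c
          rw [hJca, hrid, LinearMap.smul_apply, LinearMap.id_apply, tmul_smul, smul_tmul',
            smul_tmul', smul_eq_mul, smul_mul_assoc]
        | add u v hu hv => simp only [map_add, hu, hv, smul_add]
      | add w₁ w₂ hw₁ hw₂ =>
        rw [map_add, map_add, hw₁, hw₂, map_add, add_smul]
    set s : S := TensorProduct.rid k S w with hs_def
    have hχ's : χ' = s • LinearMap.id := by rw [← hx, ← hw, haux]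
    -- transfer back to B
    have hχS : ∀ u : S ⊗[R] B, χ.baseChange S u = s • u := by
      intro u
      apply e.injective
      have h1 : e (χ.baseChange S u) = χ' (e u) := by rw [hχ'app, e.symm_apply_apply]
      rw [h1, hχ's, LinearMap.smul_apply, LinearMap.id_apply, map_smul]
    have heq : ((1:S) ⊗ₜ χ : S ⊗[R] (B →ₗ[R] B)) = s ⊗ₜ LinearMap.id := by
      apply homBC_injective (R := R) (S := S) (M := B) (N := B)
      apply LinearMap.ext; intro u
      induction u using TensorProduct.induction_on with
      | zero => simp
      | tmul t b =>
        rw [homBC_tmul_tmul, homBC_tmul_tmul, one_mul, LinearMap.id_apply]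
        have h2 := hχS (t ⊗ₜ b)
        rw [LinearMap.baseChange_tmul] at h2
        rw [h2, smul_tmul', smul_eq_mul]
      | add u v hu hv => simp only [map_add, hu, hv]
    -- descend by faithful flatness
    set Nid : Submodule R (B →ₗ[R] B) := Submodule.span R {(LinearMap.id : B →ₗ[R] B)}
      with hNid_def
    have hπχ : ((1:S) ⊗ₜ (Nid.mkQ χ) : S ⊗[R] ((B →ₗ[R] B) ⧸ Nid)) = 0 := by
      have h3 := congrArg (LinearMap.lTensor S Nid.mkQ) heq
      rw [LinearMap.lTensor_tmul, LinearMap.lTensor_tmul] at h3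
      have h4 : Nid.mkQ LinearMap.id = 0 := by
        rw [Submodule.mkQ_apply, Submodule.Quotient.mk_eq_zero]
        exact Submodule.mem_span_singleton_self _
      rw [h4, tmul_zero] at h3
      exact h3
    have hzero : LinearMap.lTensor S (LinearMap.toSpanSingleton R _ (Nid.mkQ χ)) = 0 := by
      apply TensorProduct.ext'
      intro t c
      rw [LinearMap.lTensor_tmul, LinearMap.toSpanSingleton_apply, tmul_smul]
      have h5 : (t ⊗ₜ (Nid.mkQ χ) : S ⊗[R] ((B →ₗ[R] B) ⧸ Nid))
          = t • ((1:S) ⊗ₜ (Nid.mkQ χ)) := by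
        rw [smul_tmul', smul_eq_mul, mul_one]
      rw [h5, hπχ, smul_zero, smul_zero, LinearMap.zero_apply]
    have h6 : LinearMap.toSpanSingleton R _ (Nid.mkQ χ) = 0 :=
      (Module.FaithfullyFlat.zero_iff_lTensor_zero R S _).mpr hzero
    have h7 : Nid.mkQ χ = 0 := by simpa using LinearMap.congr_fun h6 1
    have h8 : χ ∈ Nid := by rwa [Submodule.mkQ_apply, Submodule.Quotient.mk_eq_zero] at h7
    obtain ⟨r, hr⟩ := Submodule.mem_span_singleton.mp h8
    exact ⟨r, hr.symm⟩
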